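/- For all n ≥ 1, p(q(n)) = q(p(n)) + 1. -/
import Mathlib

section WythoffAux

variable (p q : ℕ → ℕ)

/-- positivity of p -/
private lemma wy_pos (hp1 : p 1 = 1)
    (hmin : ∀ n, 1 ≤ n →
      IsLeast {m : ℕ | 0 < m ∧ ∀ i, 1 ≤ i → i ≤ n → m ≠ p i ∧ m ≠ q i} (p (n + 1))) :
    ∀ n, 1 ≤ n → 0 < p n := by
  intro n hn
  match n, hn with
  | 1, _ => simp [hp1]
  | (k+2), _ => exact (hmin (k+1) (by omega)).1.1

private lemma wy_step (hp1 : p 1 = 1)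
    (hmin : ∀ n, 1 ≤ n →
      IsLeast {m : ℕ | 0 < m ∧ ∀ i, 1 ≤ i → i ≤ n → m ≠ p i ∧ m ≠ q i} (p (n + 1))) :
    ∀ n, 1 ≤ n → p n < p (n + 1) := by
  intro n hn
  have hne : p (n+1) ≠ p n := ((hmin n hn).1.2 n hn le_rfl).1
  have hle : p n ≤ p (n+1) := by
    match n, hn with
    | 1, _ =>
      have := (hmin 1 le_rfl).1.1
      omega
    | (k+2), _ =>
      apply (hmin (k+1) (by omega)).2
      refine ⟨(hmin (k+2) (by omega)).1.1, ?_⟩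
      intro i hi1 hi2
      exact (hmin (k+2) (by omega)).1.2 i hi1 (by omega)
  omega

private lemma wy_mono (hp1 : p 1 = 1)
    (hmin : ∀ n, 1 ≤ n →
      IsLeast {m : ℕ | 0 < m ∧ ∀ i, 1 ≤ i → i ≤ n → m ≠ p i ∧ m ≠ q i} (p (n + 1))) :
    ∀ i j, 1 ≤ i → i ≤ j → p i ≤ p j := by
  intro i j hi hij
  induction j, hij using Nat.le_induction with
  | base => exact le_rfl
  | succ j hj ih => exact le_trans ih (le_of_lt (wy_step p q hp1 hmin j (by omega)))

private lemma wy_smono (hp1 : p 1 = 1)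
    (hmin : ∀ n, 1 ≤ n →
      IsLeast {m : ℕ | 0 < m ∧ ∀ i, 1 ≤ i → i ≤ n → m ≠ p i ∧ m ≠ q i} (p (n + 1))) :
    ∀ i j, 1 ≤ i → i < j → p i < p j := by
  intro i j hi hij
  have h1 : p i ≤ p (j-1) := wy_mono p q hp1 hmin i (j-1) hi (by omega)
  have h2 : p (j-1) < p (j-1+1) := wy_step p q hp1 hmin (j-1) (by omega)
  have : j - 1 + 1 = j := by omega
  rw [this] at h2
  omega

private lemma wy_ge (hp1 : p 1 = 1)
    (hmin : ∀ n, 1 ≤ n →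
      IsLeast {m : ℕ | 0 < m ∧ ∀ i, 1 ≤ i → i ≤ n → m ≠ p i ∧ m ≠ q i} (p (n + 1))) :
    ∀ n, 1 ≤ n → n ≤ p n := by
  intro n hn
  induction n, hn using Nat.le_induction with
  | base => simp [hp1]
  | succ n hn ih =>
    have := wy_step p q hp1 hmin n hn
    omega

private lemma wy_qsmono (hp1 : p 1 = 1)
    (hq : ∀ n, 1 ≤ n → q n = p n + n)
    (hmin : ∀ n, 1 ≤ n →
      IsLeast {m : ℕ | 0 < m ∧ ∀ i, 1 ≤ i → i ≤ n → m ≠ p i ∧ m ≠ q i} (p (n + 1))) :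
    ∀ i j, 1 ≤ i → i < j → q i < q j := by
  intro i j hi hij
  rw [hq i hi, hq j (by omega)]
  have := wy_mono p q hp1 hmin i j hi (le_of_lt hij)
  omega

private lemma wy_disj (hp1 : p 1 = 1)
    (hq : ∀ n, 1 ≤ n → q n = p n + n)
    (hmin : ∀ n, 1 ≤ n →
      IsLeast {m : ℕ | 0 < m ∧ ∀ i, 1 ≤ i → i ≤ n → m ≠ p i ∧ m ≠ q i} (p (n + 1))) :
    ∀ i j, 1 ≤ i → 1 ≤ j → p i ≠ q j := by
  intro i j hi hj
  by_cases h : j < i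
  · have h1 : 1 ≤ i - 1 := by omega
    have h2 := ((hmin (i-1) h1).1.2 j hj (by omega)).2
    have h3 : i - 1 + 1 = i := by omega
    rwa [h3] at h2
  · have hij : i ≤ j := by omega
    have h1 : p i ≤ p j := wy_mono p q hp1 hmin i j hi hij
    have h2 := hq j hj
    omega

private lemma wy_cover (hp1 : p 1 = 1)
    (hq : ∀ n, 1 ≤ n → q n = p n + n)
    (hmin : ∀ n, 1 ≤ n →
      IsLeast {m : ℕ | 0 < m ∧ ∀ i, 1 ≤ i → i ≤ n → m ≠ p i ∧ m ≠ q i} (p (n + 1))) :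
    ∀ m, 1 ≤ m → ∃ k, 1 ≤ k ∧ (p k = m ∨ q k = m) := by
  intro m hm
  by_contra h
  push_neg at h
  have hmem : m ∈ {x : ℕ | 0 < x ∧ ∀ i, 1 ≤ i → i ≤ m → x ≠ p i ∧ x ≠ q i} := by
    refine ⟨hm, fun i hi1 hi2 => ?_⟩
    have := h i hi1
    exact ⟨fun he => (this.1 he.symm), fun he => (this.2 he.symm)⟩
  have h1 : p (m+1) ≤ m := (hmin m hm).2 hmem
  have h2 : m + 1 ≤ p (m+1) := wy_ge p q hp1 hmin (m+1) (by omega)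
  omega

/-- counting lemma -/
private lemma wy_count (hp1 : p 1 = 1)
    (hq : ∀ n, 1 ≤ n → q n = p n + n)
    (hmin : ∀ n, 1 ≤ n →
      IsLeast {m : ℕ | 0 < m ∧ ∀ i, 1 ≤ i → i ≤ n → m ≠ p i ∧ m ≠ q i} (p (n + 1)))
    (m a b : ℕ) (hm : 1 ≤ m) (ha : 1 ≤ a) (hb : 1 ≤ b)
    (hpa : p a ≤ m) (hpa' : m < p (a+1)) (hqb : q b ≤ m) (hqb' : m < q (b+1)) :
    a + b = m := by
  classical
  set A := (Finset.Icc 1 a).image p with hA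
  set B := (Finset.Icc 1 b).image q with hB
  have hAB : A ∪ B = Finset.Icc 1 m := by
    apply Finset.Subset.antisymm
    · intro x hx
      simp only [hA, hB, Finset.mem_union, Finset.mem_image, Finset.mem_Icc] at hx
      simp only [Finset.mem_Icc]
      rcases hx with ⟨k, ⟨hk1, hk2⟩, rfl⟩ | ⟨k, ⟨hk1, hk2⟩, rfl⟩
      · exact ⟨wy_pos p q hp1 hmin k hk1, le_trans (wy_mono p q hp1 hmin k a hk1 hk2) hpa⟩
      · constructor
        · rw [hq k hk1]; omega
        · rcases eq_or_lt_of_le hk2 with rfl | hlt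
          · exact hqb
          · exact le_trans (le_of_lt (wy_qsmono p q hp1 hq hmin k b hk1 hlt)) hqb
    · intro x hx
      simp only [Finset.mem_Icc] at hx
      obtain ⟨k, hk, hpk | hqk⟩ := wy_cover p q hp1 hq hmin x hx.1
      · have hka : k ≤ a := by
          by_contra hc
          have : p (a+1) ≤ p k := wy_mono p q hp1 hmin (a+1) k (by omega) (by omega)
          omega
        simp only [hA, hB, Finset.mem_union, Finset.mem_image, Finset.mem_Icc]
        exact Or.inl ⟨k, ⟨hk, hka⟩, hpk⟩
      · have hkb : k ≤ b := by
          by_contra hc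
          have h1 : q (b+1) ≤ q k := by
            rcases eq_or_lt_of_le (show b + 1 ≤ k by omega) with rfl | hlt
            · exact le_rfl
            · exact le_of_lt (wy_qsmono p q hp1 hq hmin (b+1) k (by omega) hlt)
          omega
        simp only [hA, hB, Finset.mem_union, Finset.mem_image, Finset.mem_Icc]
        exact Or.inr ⟨k, ⟨hk, hkb⟩, hqk⟩
  have hdisj : Disjoint A B := by
    rw [Finset.disjoint_left]
    intro x hxA hxB
    simp only [hA, hB, Finset.mem_image, Finset.mem_Icc] at hxA hxB
    obtain ⟨i, ⟨hi1, _⟩, hpi⟩ := hxA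
    obtain ⟨j, ⟨hj1, _⟩, hqj⟩ := hxB
    exact wy_disj p q hp1 hq hmin i j hi1 hj1 (hpi.trans hqj.symm)
  have cA : A.card = a := by
    rw [hA, Finset.card_image_of_injOn, Nat.card_Icc]
    · omega
    · intro x hx y hy hxy
      simp only [Finset.coe_Icc, Set.mem_Icc] at hx hy
      by_contra hne
      rcases lt_or_gt_of_ne hne with h | h
      · exact absurd hxy (ne_of_lt (wy_smono p q hp1 hmin x y hx.1 h))
      · exact absurd hxy.symm (ne_of_lt (wy_smono p q hp1 hmin y x hy.1 h))
  have cB : B.card = b := by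
    rw [hB, Finset.card_image_of_injOn, Nat.card_Icc]
    · omega
    · intro x hx y hy hxy
      simp only [Finset.coe_Icc, Set.mem_Icc] at hx hy
      by_contra hne
      rcases lt_or_gt_of_ne hne with h | h
      · exact absurd hxy (ne_of_lt (wy_qsmono p q hp1 hq hmin x y hx.1 h))
      · exact absurd hxy.symm (ne_of_lt (wy_qsmono p q hp1 hq hmin y x hy.1 h))
  have hcard := congrArg Finset.card hAB
  rw [Finset.card_union_of_disjoint hdisj, cA, cB, Nat.card_Icc] at hcard
  omega

private lemma wy_exists_a (hp1 : p 1 = 1)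
    (hmin : ∀ n, 1 ≤ n →
      IsLeast {m : ℕ | 0 < m ∧ ∀ i, 1 ≤ i → i ≤ n → m ≠ p i ∧ m ≠ q i} (p (n + 1))) :
    ∀ m, 1 ≤ m → ∃ a, 1 ≤ a ∧ p a ≤ m ∧ m < p (a+1) := by
  intro m hm
  have hex : ∃ k, m < p (k+1) := ⟨m, by have := wy_ge p q hp1 hmin (m+1) (by omega); omega⟩
  classical
  set a := Nat.find hex with hadef
  have h1 : m < p (a+1) := Nat.find_spec hex
  have ha1 : 1 ≤ a := by
    by_contra hc
    have : a = 0 := by omega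
    rw [this] at h1
    rw [hp1] at h1
    omega
  have h2 : p a ≤ m := by
    have := Nat.find_min hex (show a - 1 < a by omega)
    have he : a - 1 + 1 = a := by omega
    rw [he] at this
    omega
  exact ⟨a, ha1, h2, h1⟩

/-- q n = p (p n) + 1 -/
private lemma wy_key1 (hp1 : p 1 = 1)
    (hq : ∀ n, 1 ≤ n → q n = p n + n)
    (hmin : ∀ n, 1 ≤ n →
      IsLeast {m : ℕ | 0 < m ∧ ∀ i, 1 ≤ i → i ≤ n → m ≠ p i ∧ m ≠ q i} (p (n + 1))) :
    ∀ n, 1 ≤ n → q n = p (p n) + 1 := by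
  intro n hn
  have hpn : 1 ≤ p n := wy_pos p q hp1 hmin n hn
  have hqn : 2 ≤ q n := by
    rw [hq n hn]; omega
  -- find a with p a ≤ q n < p (a+1)
  obtain ⟨a, ha1, ha2, ha3⟩ := wy_exists_a p q hp1 hmin (q n) (by omega)
  -- counting at m = q n with b = n
  have hb3 : q n < q (n+1) := wy_qsmono p q hp1 hq hmin n (n+1) hn (by omega)
  have hcount : a + n = q n :=
    wy_count p q hp1 hq hmin (q n) a n (by omega) ha1 hn ha2 ha3 le_rfl hb3
  have haeq : a = p n := by
    have := hq n hn
    omega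
  subst haeq
  -- q n - 1 is a p-value
  obtain ⟨k, hk1, hk2⟩ := wy_cover p q hp1 hq hmin (q n - 1) (by omega)
  rcases hk2 with hpk | hqk
  · -- p k = q n - 1
    have hkle : k ≤ p n := by
      by_contra hc
      have : p (p n + 1) ≤ p k := wy_mono p q hp1 hmin (p n + 1) k (by omega) (by omega)
      omega
    have h1 : p k ≤ p (p n) := wy_mono p q hp1 hmin k (p n) hk1 hkle
    have h2 : p (p n) ≠ q n := wy_disj p q hp1 hq hmin (p n) n hpn hn
    omega
  · -- q k = q n - 1, impossible
    exfalso
    by_cases hkn : k < n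
    · have h1 : q k ≤ q (n-1) := by
        rcases eq_or_lt_of_le (show k ≤ n - 1 by omega) with rfl | hlt
        · exact le_rfl
        · exact le_of_lt (wy_qsmono p q hp1 hq hmin k (n-1) hk1 hlt)
      have h2 : q (n-1) = p (n-1) + (n-1) := hq (n-1) (by omega)
      have h3 : p (n-1) < p n := wy_smono p q hp1 hmin (n-1) n (by omega) (by omega)
      have h4 : q n = p n + n := hq n hn
      omega
    · have h1 : q n ≤ q k := by
        rcases eq_or_lt_of_le (show n ≤ k by omega) with rfl | hlt
        · exact le_rfl
        · exact le_of_lt (wy_qsmono p q hp1 hq hmin n k hn hlt)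
      omega

/-- p (q n) = p n + q n -/
private lemma wy_key2 (hp1 : p 1 = 1)
    (hq : ∀ n, 1 ≤ n → q n = p n + n)
    (hmin : ∀ n, 1 ≤ n →
      IsLeast {m : ℕ | 0 < m ∧ ∀ i, 1 ≤ i → i ≤ n → m ≠ p i ∧ m ≠ q i} (p (n + 1))) :
    ∀ n, 1 ≤ n → p (q n) = p n + q n := by
  intro n hn
  have hpn : 1 ≤ p n := wy_pos p q hp1 hmin n hn
  have hqn : 2 ≤ q n := by rw [hq n hn]; omega
  have hk1 := wy_key1 p q hp1 hq hmin n hn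
  set m := p n + q n with hm
  -- q (p n) = m - 1
  have hqpn : q (p n) = m - 1 := by
    rw [hq (p n) hpn]
    omega
  -- q (p n + 1) ≥ m + 2
  have hppn1 : q n + 1 ≤ p (p n + 1) := by
    have h1 : p (p n) < p (p n + 1) := wy_step p q hp1 hmin (p n) hpn
    have h2 : p (p n + 1) ≠ q n := wy_disj p q hp1 hq hmin (p n + 1) n (by omega) hn
    omega
  have hqpn1 : m + 2 ≤ q (p n + 1) := by
    rw [hq (p n + 1) (by omega)]
    omega
  obtain ⟨a, ha1, ha2, ha3⟩ := wy_exists_a p q hp1 hmin m (by omega)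
  have hcount : a + p n = m :=
    wy_count p q hp1 hq hmin m a (p n) (by omega) ha1 hpn ha2 ha3 (by omega) (by omega)
  have haeq : a = q n := by omega
  subst haeq
  -- m is a p-value
  obtain ⟨k, hk, hpk | hqk⟩ := wy_cover p q hp1 hq hmin m (by omega)
  · have hkle : k ≤ q n := by
      by_contra hc
      have : p (q n + 1) ≤ p k := wy_mono p q hp1 hmin (q n + 1) k (by omega) (by omega)
      omega
    have h1 : p k ≤ p (q n) := wy_mono p q hp1 hmin k (q n) hk hkle
    omega
  · exfalso
    have hkle : k ≤ p n := by
      by_contra hc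
      have : q (p n + 1) ≤ q k := by
        rcases eq_or_lt_of_le (show p n + 1 ≤ k by omega) with rfl | hlt
        · exact le_rfl
        · exact le_of_lt (wy_qsmono p q hp1 hq hmin (p n + 1) k (by omega) hlt)
      omega
    have : q k ≤ q (p n) := by
      rcases eq_or_lt_of_le hkle with rfl | hlt
      · exact le_rfl
      · exact le_of_lt (wy_qsmono p q hp1 hq hmin k (p n) hk hlt)
    omega

end WythoffAux

/-- Wythoff sequences: `p 1 = 1`, `q n = p n + n` for `n ≥ 1`, and `p (n+1)` is the
smallest positive integer not contained in `U_n = {p 1, …, p n, q 1, …, q n}`. -/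

theorem stmt_12 (p q : ℕ → ℕ)
    (hp1 : p 1 = 1)
    (hq : ∀ n, 1 ≤ n → q n = p n + n)
    (hmin : ∀ n, 1 ≤ n →
      IsLeast {m : ℕ | 0 < m ∧ ∀ i, 1 ≤ i → i ≤ n → m ≠ p i ∧ m ≠ q i} (p (n + 1))) :
    ∀ n, 1 ≤ n → p (q n) = q (p n) + 1 := by
  intro n hn
  have hpn : 1 ≤ p n := wy_pos p q hp1 hmin n hn
  have h1 := wy_key1 p q hp1 hq hmin n hn
  have h2 := wy_key2 p q hp1 hq hmin n hn
  have h3 : q (p n) = p (p n) + p n := hq (p n) hpn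
  omega
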